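/- For every real number L ≥ 1 there exists a constant C_L > 0, depending only on L, with the following property: for every probability space (Ω, F, P), every sub-σ-algebra G ⊆ F, and every real-valued random variable F with E[|F|^{8L}] < ∞, defining ψ^2(F) = (F − E[F | G])^2 and ψ^3(F) = (ψ^2(F) − E[ψ^2(F) | G])^2, one has E[|ψ^3(F)|^L] ≤ C_L ( E[|F|^{4L}] + E[|F|^{2L}]^{1/2} E[|F|^{6L}]^{1/2} + E[|F|^{2L}]^{1/2} E[|F|^{4L}]^{1/4} E[|F|^{8L}]^{1/4} ). -/

import Mathlib

open MeasureTheory Real ENNReal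



lemma measurable_real_sign : Measurable Real.sign := by
  unfold Real.sign
  exact Measurable.ite (measurableSet_lt measurable_id measurable_const) measurable_const
    (Measurable.ite (measurableSet_lt measurable_const measurable_id) measurable_const
      measurable_const)

lemma sign_mul_self_eq_abs (x : ℝ) : Real.sign x * x = |x| := by
  rcases lt_trichotomy x 0 with h | h | h
  · rw [Real.sign_of_neg h, abs_of_neg h]; ring
  · simp [h]
  · rw [Real.sign_of_pos h, abs_of_pos h]; ring

lemma abs_sign_le_one (x : ℝ) : |Real.sign x| ≤ 1 := by
  rcases Real.sign_apply_eq x with h | h | h <;> rw [h] <;> norm_num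

private lemma meas_trunc {Ω : Type} [mm : MeasurableSpace Ω] {g : Ω → ℝ} (h : Measurable g)
    (n : ℕ) : Measurable fun ω => min |g ω| (n : ℝ) := h.abs.min measurable_const

private lemma meas_aemeas {Ω : Type} [mm : MeasurableSpace Ω] {f : Ω → ENNReal} (h : Measurable f)
    (μ : MeasureTheory.Measure Ω) : AEMeasurable f μ := h.aemeasurable

/-- Conditional Jensen for `|·|^p`, `p > 1`, in lintegral form. -/
lemma lintegral_rpow_condexp_le {Ω : Type} [mΩ : MeasurableSpace Ω] {μ : Measure Ω}
    [IsProbabilityMeasure μ] {m : MeasurableSpace Ω} (hm : m ≤ mΩ) {Y : Ω → ℝ}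
    (hY : Integrable Y μ) {p : ℝ} (hp : 1 < p) :
    ∫⁻ ω, ENNReal.ofReal (|(μ[Y|m]) ω| ^ p) ∂μ ≤ ∫⁻ ω, ENNReal.ofReal (|Y ω| ^ p) ∂μ := by
  have hp0 : (0:ℝ) < p := lt_trans one_pos hp
  have hp1 : (0:ℝ) ≤ p - 1 := by linarith
  have hpne : p - 1 ≠ 0 := sub_ne_zero_of_ne (ne_of_gt hp)
  set q : ℝ := p / (p - 1) with hq
  have hpq : p.HolderConjugate q := Real.HolderConjugate.conjExponent hp
  have hpq1 : (p - 1) * q = p := by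
    rw [hq, mul_comm, div_mul_cancel₀ _ hpne]
  set g : Ω → ℝ := μ[Y|m] with hgdef
  have hg_sm : StronglyMeasurable[m] g := stronglyMeasurable_condExp
  have hg_meas : Measurable[m] g := hg_sm.measurable
  have hg_measΩ : Measurable[mΩ] g := (hg_sm.mono hm).measurable
  set B : ℝ≥0∞ := ∫⁻ ω, ENNReal.ofReal (|Y ω| ^ p) ∂μ with hB
  -- truncations
  set gn : ℕ → Ω → ℝ := fun n ω => min |g ω| n with hgn
  have hgn_nonneg : ∀ n ω, 0 ≤ gn n ω := fun n ω => le_min (abs_nonneg _) n.cast_nonneg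
  have hgn_le : ∀ n ω, gn n ω ≤ n := fun n ω => min_le_right _ _
  have hgn_le_abs : ∀ n ω, gn n ω ≤ |g ω| := fun n ω => min_le_left _ _
  have hgn_measΩ : ∀ n, Measurable[mΩ] (gn n) := fun n => meas_trunc (mm := mΩ) hg_measΩ n
  have hgnp_measΩ : ∀ n, Measurable[mΩ] fun ω => gn n ω ^ p :=
    fun n => (hgn_measΩ n).pow (@measurable_const ℝ Ω _ mΩ _)
  have hgnp1_measΩ : ∀ n, Measurable[mΩ] fun ω => gn n ω ^ (p - 1) :=
    fun n => (hgn_measΩ n).pow (@measurable_const ℝ Ω _ mΩ _)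
  have key : ∀ n : ℕ, ∫⁻ ω, ENNReal.ofReal (gn n ω ^ p) ∂μ ≤ B := by
    intro n
    set A : ℝ≥0∞ := ∫⁻ ω, ENNReal.ofReal (gn n ω ^ p) ∂μ with hA
    have hA_top : A ≠ ⊤ := by
      have h1 : A ≤ ∫⁻ _ , ENNReal.ofReal ((n:ℝ) ^ p) ∂μ := by
        refine lintegral_mono fun ω => ENNReal.ofReal_le_ofReal ?_
        exact Real.rpow_le_rpow (hgn_nonneg n ω) (hgn_le n ω) hp0.le
      refine ne_top_of_le_ne_top ?_ h1
      simp [lintegral_const]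
    by_cases hA0 : A = 0
    · simp [hA0]
    by_cases hBtop : B = ⊤
    · simp [hBtop]
    -- the multiplier
    set h : Ω → ℝ := fun ω => Real.sign (g ω) * gn n ω ^ (p - 1) with hh
    have hh_m : Measurable[m] h := by
      have h1 : Measurable[m] (gn n) := hg_meas.abs.min measurable_const
      exact (measurable_real_sign.comp hg_meas).mul (h1.pow measurable_const)
    have hh_sm : StronglyMeasurable[m] h := hh_m.stronglyMeasurable
    have hh_bound : ∀ ω, ‖h ω‖ ≤ (n:ℝ) ^ (p - 1) := by
      intro ω
      have habs : |h ω| = |Real.sign (g ω)| * |gn n ω ^ (p - 1)| := abs_mul _ _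
      rw [Real.norm_eq_abs, habs]
      have h2 : |gn n ω ^ (p - 1)| = gn n ω ^ (p - 1) :=
        abs_of_nonneg (Real.rpow_nonneg (hgn_nonneg n ω) _)
      calc |Real.sign (g ω)| * |gn n ω ^ (p - 1)| ≤ 1 * |gn n ω ^ (p - 1)| :=
            mul_le_mul_of_nonneg_right (abs_sign_le_one _) (abs_nonneg _)
        _ = gn n ω ^ (p - 1) := by rw [one_mul, h2]
        _ ≤ (n:ℝ) ^ (p - 1) := Real.rpow_le_rpow (hgn_nonneg n ω) (hgn_le n ω) hp1
    have hsplit : ∀ ω, gn n ω ^ p = gn n ω ^ (p - 1) * gn n ω := by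
      intro ω
      have h2 := Real.rpow_add' (hgn_nonneg n ω) (show p - 1 + 1 ≠ 0 by
        simpa using hp0.ne')
      simpa [Real.rpow_one] using h2
    -- pointwise: gn^p ≤ h * g
    have hpt : ∀ ω, gn n ω ^ p ≤ h ω * g ω := by
      intro ω
      have h1 : h ω * g ω = gn n ω ^ (p - 1) * |g ω| := by
        rw [hh]
        calc Real.sign (g ω) * gn n ω ^ (p - 1) * g ω
            = gn n ω ^ (p - 1) * (Real.sign (g ω) * g ω) := by ring
          _ = gn n ω ^ (p - 1) * |g ω| := by rw [sign_mul_self_eq_abs]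
      rw [h1, hsplit ω]
      exact mul_le_mul_of_nonneg_left (hgn_le_abs n ω)
        (Real.rpow_nonneg (hgn_nonneg n ω) _)
    -- integrability
    have hgnp_int : Integrable (fun ω => gn n ω ^ p) μ := by
      refine (integrable_const ((n:ℝ) ^ p)).mono' (hgnp_measΩ n).aestronglyMeasurable ?_
      refine Filter.Eventually.of_forall fun ω => ?_
      rw [Real.norm_eq_abs, abs_of_nonneg (Real.rpow_nonneg (hgn_nonneg n ω) _)]
      exact Real.rpow_le_rpow (hgn_nonneg n ω) (hgn_le n ω) hp0.le
    have hh_smΩ : AEStronglyMeasurable[mΩ] h μ := ((hh_sm.mono hm)).aestronglyMeasurable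
    have hhg_int : Integrable (fun ω => h ω * g ω) μ :=
      (integrable_condExp (m := m)).bdd_mul hh_smΩ (Filter.Eventually.of_forall hh_bound)
    have hhY_int : Integrable (fun ω => h ω * Y ω) μ :=
      hY.bdd_mul hh_smΩ (Filter.Eventually.of_forall hh_bound)
    -- step 1
    have step1 : ∫ ω, gn n ω ^ p ∂μ ≤ ∫ ω, h ω * Y ω ∂μ := by
      have e1 : ∫ ω, gn n ω ^ p ∂μ ≤ ∫ ω, h ω * g ω ∂μ :=
        integral_mono hgnp_int hhg_int hpt
      have pull : μ[fun ω => h ω * Y ω|m] =ᵐ[μ] fun ω => h ω * (μ[Y|m]) ω :=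
        condExp_stronglyMeasurable_mul_of_bound hm hh_sm hY ((n:ℝ) ^ (p - 1))
          (Filter.Eventually.of_forall hh_bound)
      have e2 : ∫ ω, h ω * g ω ∂μ = ∫ ω, h ω * Y ω ∂μ :=
        ((integral_congr_ae pull).symm).trans (integral_condExp hm)
      linarith
    -- step 2
    have hgnY_int : Integrable (fun ω => gn n ω ^ (p - 1) * |Y ω|) μ := by
      refine hY.abs.bdd_mul (c := (n:ℝ) ^ (p - 1)) (hgnp1_measΩ n).aestronglyMeasurable
        (Filter.Eventually.of_forall (fun ω => ?_))
      rw [Real.norm_eq_abs, abs_of_nonneg (Real.rpow_nonneg (hgn_nonneg n ω) _)]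
      exact Real.rpow_le_rpow (hgn_nonneg n ω) (hgn_le n ω) hp1
    have step2 : ∫ ω, h ω * Y ω ∂μ ≤ ∫ ω, gn n ω ^ (p - 1) * |Y ω| ∂μ := by
      refine integral_mono hhY_int hgnY_int fun ω => ?_
      calc h ω * Y ω ≤ |h ω * Y ω| := le_abs_self _
        _ = |Real.sign (g ω)| * (gn n ω ^ (p - 1) * |Y ω|) := by
            rw [hh, abs_mul, abs_mul, abs_of_nonneg (Real.rpow_nonneg (hgn_nonneg n ω) _)]
            ring
        _ ≤ 1 * (gn n ω ^ (p - 1) * |Y ω|) := by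
            refine mul_le_mul_of_nonneg_right (abs_sign_le_one _) ?_
            positivity
        _ = gn n ω ^ (p - 1) * |Y ω| := one_mul _
    -- step 3 : Hölder
    have holder : ENNReal.ofReal (∫ ω, gn n ω ^ (p - 1) * |Y ω| ∂μ)
        ≤ A ^ (1/q) * B ^ (1/p) := by
      rw [ofReal_integral_eq_lintegral_ofReal hgnY_int
        (Filter.Eventually.of_forall fun ω => by positivity)]
      have e1 : ∀ ω, ENNReal.ofReal (gn n ω ^ (p - 1) * |Y ω|)
          = ENNReal.ofReal (gn n ω ^ (p - 1)) * ENNReal.ofReal (|Y ω|) := fun ω =>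
        ENNReal.ofReal_mul (Real.rpow_nonneg (hgn_nonneg n ω) _)
      simp_rw [e1]
      have hmeas1 : Measurable[mΩ] fun ω => ENNReal.ofReal (gn n ω ^ (p - 1)) :=
        (hgnp1_measΩ n).ennreal_ofReal
      have hmeas2 : AEMeasurable (fun ω => ENNReal.ofReal (|Y ω|)) μ :=
        (hY.abs.aestronglyMeasurable.aemeasurable).ennreal_ofReal
      have H := @ENNReal.lintegral_mul_le_Lp_mul_Lq Ω mΩ μ _ _ hpq.symm _ _
        (meas_aemeas (mm := mΩ) hmeas1 μ) hmeas2
      refine H.trans (le_of_eq ?_)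
      have eq1 : (∫⁻ ω, ENNReal.ofReal (gn n ω ^ (p - 1)) ^ q ∂μ) = A := by
        rw [hA]
        refine lintegral_congr fun ω => ?_
        rw [ENNReal.ofReal_rpow_of_nonneg (Real.rpow_nonneg (hgn_nonneg n ω) _)
          hpq.symm.nonneg, ← Real.rpow_mul (hgn_nonneg n ω), hpq1]
      have eq2 : (∫⁻ ω, ENNReal.ofReal |Y ω| ^ p ∂μ) = B := by
        rw [hB]
        refine lintegral_congr fun ω => ?_
        rw [ENNReal.ofReal_rpow_of_nonneg (abs_nonneg _) hp0.le]
      rw [eq1, eq2]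
    -- combine
    have hA_eq : ENNReal.ofReal (∫ ω, gn n ω ^ p ∂μ) = A :=
      ofReal_integral_eq_lintegral_ofReal hgnp_int
        (Filter.Eventually.of_forall fun ω => Real.rpow_nonneg (hgn_nonneg n ω) _)
    have hAle : A ≤ A ^ (1/q) * B ^ (1/p) :=
      calc A = ENNReal.ofReal (∫ ω, gn n ω ^ p ∂μ) := hA_eq.symm
        _ ≤ ENNReal.ofReal (∫ ω, gn n ω ^ (p - 1) * |Y ω| ∂μ) :=
            ENNReal.ofReal_le_ofReal (step1.trans step2)
        _ ≤ A ^ (1/q) * B ^ (1/p) := holder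
    -- cancel
    have hq0 : (0:ℝ) < 1/q := hpq.symm.one_div_pos
    have hp0' : (0:ℝ) < 1/p := hpq.one_div_pos
    have hsum : (1:ℝ)/q + 1/p = 1 := by
      have := hpq.symm.inv_add_inv_eq_one
      simpa [one_div] using this
    have hAq_ne0 : A ^ ((1:ℝ)/q) ≠ 0 := by
      simp [ENNReal.rpow_eq_zero_iff, hA0, hA_top, hq0, hq0.le, not_lt.mpr hq0.le]
    have hAq_netop : A ^ ((1:ℝ)/q) ≠ ⊤ := by
      exact ENNReal.rpow_ne_top_of_nonneg hq0.le hA_top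
    have hsplitA : A = A ^ ((1:ℝ)/q) * A ^ ((1:ℝ)/p) := by
      rw [← ENNReal.rpow_add _ _ hA0 hA_top, hsum, ENNReal.rpow_one]
    have hle2 : A ^ ((1:ℝ)/p) ≤ B ^ ((1:ℝ)/p) := by
      have h3 : A ^ ((1:ℝ)/q) * A ^ ((1:ℝ)/p) ≤ A ^ ((1:ℝ)/q) * B ^ ((1:ℝ)/p) :=
        calc A ^ ((1:ℝ)/q) * A ^ ((1:ℝ)/p) = A := hsplitA.symm
          _ ≤ A ^ (1/q) * B ^ (1/p) := hAle
      exact (ENNReal.mul_le_mul_iff_right hAq_ne0 hAq_netop).mp h3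
    have := ENNReal.rpow_le_rpow hle2 hp0.le
    rwa [← ENNReal.rpow_mul, ← ENNReal.rpow_mul, one_div,
      inv_mul_cancel₀ hp0.ne', ENNReal.rpow_one, ENNReal.rpow_one] at this
  -- monotone convergence
  have hpt_sup : ∀ ω, (⨆ n : ℕ, ENNReal.ofReal (gn n ω ^ p)) = ENNReal.ofReal (|g ω| ^ p) := by
    intro ω
    refine le_antisymm (iSup_le fun n => ENNReal.ofReal_le_ofReal
      (Real.rpow_le_rpow (hgn_nonneg n ω) (hgn_le_abs n ω) hp0.le)) ?_
    have hN : gn ⌈|g ω|⌉₊ ω = |g ω| := min_eq_left (Nat.le_ceil _)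
    have := le_iSup (fun n : ℕ => ENNReal.ofReal (gn n ω ^ p)) ⌈|g ω|⌉₊
    rwa [hN] at this
  calc ∫⁻ ω, ENNReal.ofReal (|g ω| ^ p) ∂μ
      = ∫⁻ ω, ⨆ n : ℕ, ENNReal.ofReal (gn n ω ^ p) ∂μ := by
        refine lintegral_congr fun ω => (hpt_sup ω).symm
    _ = ⨆ n : ℕ, ∫⁻ ω, ENNReal.ofReal (gn n ω ^ p) ∂μ := by
        refine lintegral_iSup (fun n => (hgnp_measΩ n).ennreal_ofReal) ?_
        intro n k hnk ω
        refine ENNReal.ofReal_le_ofReal (Real.rpow_le_rpow (hgn_nonneg n ω) ?_ hp0.le)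
        exact min_le_min le_rfl (Nat.cast_le.mpr hnk)
    _ ≤ B := iSup_le key

private lemma add_rpow_le_two_rpow (a b p : ℝ) (ha : 0 ≤ a) (hb : 0 ≤ b) (hp : 0 ≤ p) :
    (a + b) ^ p ≤ 2 ^ p * (a ^ p + b ^ p) := by
  have h1 : a + b ≤ 2 * max a b := by
    rcases le_total a b with h | h
    · calc a + b ≤ b + b := by linarith
        _ = 2 * b := by ring
        _ ≤ 2 * max a b := by rw [max_eq_right h]
    · calc a + b ≤ a + a := by linarith
        _ = 2 * a := by ring
        _ ≤ 2 * max a b := by rw [max_eq_left h]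
  calc (a + b) ^ p ≤ (2 * max a b) ^ p :=
        Real.rpow_le_rpow (by positivity) h1 hp
    _ = 2 ^ p * max a b ^ p := Real.mul_rpow (by norm_num) (le_max_of_le_left ha)
    _ ≤ 2 ^ p * (a ^ p + b ^ p) := by
        refine mul_le_mul_of_nonneg_left ?_ (by positivity)
        rcases max_cases a b with ⟨h1, _⟩ | ⟨h1, _⟩ <;> rw [h1]
        · exact le_add_of_nonneg_right (Real.rpow_nonneg hb p)
        · exact le_add_of_nonneg_left (Real.rpow_nonneg ha p)

private lemma rpow_le_one_add_rpow (t r s : ℝ) (ht : 0 ≤ t) (hr : 0 ≤ r) (hrs : r ≤ s) :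
    t ^ r ≤ 1 + t ^ s := by
  rcases le_total t 1 with h | h
  · have : t ^ r ≤ 1 := Real.rpow_le_one ht h hr
    have h2 : 0 ≤ t ^ s := Real.rpow_nonneg ht s
    linarith
  · have : t ^ r ≤ t ^ s := Real.rpow_le_rpow_of_exponent_le h hrs
    have h2 : (0:ℝ) ≤ t ^ r := Real.rpow_nonneg ht r
    linarith

private lemma sq_abs_rpow (x r : ℝ) : |x ^ 2| ^ r = |x| ^ (2 * r) := by
  rw [abs_pow, ← Real.rpow_natCast |x| 2, ← Real.rpow_mul (abs_nonneg x)]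
  norm_num


/-- Moment bound for the third iterate `ψ^3(F)` of the centering-and-squaring operation
`F ↦ (F − E[F|G])²`: for every `L ≥ 1` there is a constant `C_L > 0` such that
`E[|ψ^3(F)|^L] ≤ C_L (E[|F|^{4L}] + E[|F|^{2L}]^{1/2} E[|F|^{6L}]^{1/2}
  + E[|F|^{2L}]^{1/2} E[|F|^{4L}]^{1/4} E[|F|^{8L}]^{1/4})`. -/
theorem psi3_moment_bound (L : ℝ) (hL : 1 ≤ L) :
    ∃ C : ℝ, 0 < C ∧
      ∀ (Ω : Type) (mΩ : MeasurableSpace Ω) (μ : Measure Ω), IsProbabilityMeasure μ →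
      ∀ G : MeasurableSpace Ω, G ≤ mΩ →
      ∀ F : Ω → ℝ, AEStronglyMeasurable F μ →
        Integrable (fun ω => |F ω| ^ (8 * L)) μ →
        ∫ ω, |((F ω - (μ[F|G]) ω) ^ 2
              - (μ[fun ω' => (F ω' - (μ[F|G]) ω') ^ 2|G]) ω) ^ 2| ^ L ∂μ ≤
          C * ((∫ ω, |F ω| ^ (4 * L) ∂μ)
            + (∫ ω, |F ω| ^ (2 * L) ∂μ) ^ ((1 : ℝ) / 2)
                * (∫ ω, |F ω| ^ (6 * L) ∂μ) ^ ((1 : ℝ) / 2)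
            + (∫ ω, |F ω| ^ (2 * L) ∂μ) ^ ((1 : ℝ) / 2)
                * (∫ ω, |F ω| ^ (4 * L) ∂μ) ^ ((1 : ℝ) / 4)
                * (∫ ω, |F ω| ^ (8 * L) ∂μ) ^ ((1 : ℝ) / 4)) := by
  have hL0 : (0:ℝ) < L := lt_of_lt_of_le one_pos hL
  refine ⟨4 * 2 ^ (2 * L) * 2 ^ (4 * L), by positivity, ?_⟩
  intro Ω mΩ μ hprob G hG F hFmeas hF8
  haveI : IsProbabilityMeasure μ := hprob
  letI : MeasurableSpace Ω := mΩ
  set C : ℝ := 4 * 2 ^ (2 * L) * 2 ^ (4 * L) with hC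
  have hCpos : 0 < C := by rw [hC]; positivity
  -- integrability of powers of |F|
  have habsF : AEMeasurable (fun ω => |F ω|) μ :=
    (measurable_abs.comp_aemeasurable (AEStronglyMeasurable.mono hG hFmeas).aemeasurable)
  have hrint : ∀ r : ℝ, 0 < r → r ≤ 8 * L → Integrable (fun ω => |F ω| ^ r) μ := by
    intro r hr0 hr8
    refine ((integrable_const (1:ℝ)).add hF8).mono' ?_ ?_
    · exact (habsF.pow aemeasurable_const).aestronglyMeasurable
    · refine Filter.Eventually.of_forall fun ω => ?_
      rw [Real.norm_eq_abs, abs_of_nonneg (Real.rpow_nonneg (abs_nonneg _) _)]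
      exact rpow_le_one_add_rpow _ _ _ (abs_nonneg _) hr0.le hr8
  have hF1 : Integrable F μ := by
    refine ((integrable_const (1:ℝ)).add hF8).mono' (AEStronglyMeasurable.mono hG hFmeas) ?_
    refine Filter.Eventually.of_forall fun ω => ?_
    rw [Real.norm_eq_abs]
    calc |F ω| = |F ω| ^ (1:ℝ) := (Real.rpow_one _).symm
      _ ≤ 1 + |F ω| ^ (8 * L) :=
          rpow_le_one_add_rpow _ _ _ (abs_nonneg _) zero_le_one (by linarith)
  set g1 : Ω → ℝ := μ[F|G] with hg1def
  have hg1m : Measurable g1 := ((stronglyMeasurable_condExp (m := G)).mono hG).measurable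
  set Y : Ω → ℝ := fun ω => (F ω - g1 ω) ^ 2 with hYdef
  set g2 : Ω → ℝ := μ[Y|G] with hg2def
  have hg2m : Measurable g2 := ((stronglyMeasurable_condExp (m := G)).mono hG).measurable
  have hXaem : AEMeasurable (fun ω => F ω - g1 ω) μ := (AEStronglyMeasurable.mono hG hFmeas).aemeasurable.sub hg1m.aemeasurable
  have hYaem : AEMeasurable Y μ := by
    have : AEMeasurable (fun ω => (F ω - g1 ω) * (F ω - g1 ω)) μ := hXaem.mul hXaem
    refine this.congr (Filter.Eventually.of_forall fun ω => ?_)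
    simp [hYdef, sq]
  -- basic lintegrals
  set BF4 : ℝ≥0∞ := ∫⁻ ω, ENNReal.ofReal (|F ω| ^ (4 * L)) ∂μ with hBF4
  set I4 : ℝ := ∫ ω, |F ω| ^ (4 * L) ∂μ with hI4def
  have hI4nonneg : 0 ≤ I4 := integral_nonneg fun ω => Real.rpow_nonneg (abs_nonneg _) _
  have hBF4_eq : BF4 = ENNReal.ofReal I4 := by
    rw [hBF4, hI4def,
      ofReal_integral_eq_lintegral_ofReal (hrint (4 * L) (by linarith) (by linarith))
        (Filter.Eventually.of_forall fun ω => Real.rpow_nonneg (abs_nonneg _) _)]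
  -- Jensen for g1 at exponent 4L
  have J4 : ∫⁻ ω, ENNReal.ofReal (|g1 ω| ^ (4 * L)) ∂μ ≤ BF4 :=
    lintegral_rpow_condexp_le hG hF1 (by linarith : (1:ℝ) < 4 * L)
  -- bound on X moments
  set M4X : ℝ≥0∞ := ∫⁻ ω, ENNReal.ofReal (|F ω - g1 ω| ^ (4 * L)) ∂μ with hM4X
  have hM4X_le : M4X ≤ ENNReal.ofReal (2 ^ (4 * L) * (I4 + I4)) := by
    have hpt : ∀ ω, ENNReal.ofReal (|F ω - g1 ω| ^ (4 * L)) ≤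
        ENNReal.ofReal (2 ^ (4 * L) * (|F ω| ^ (4 * L) + |g1 ω| ^ (4 * L))) := by
      intro ω
      refine ENNReal.ofReal_le_ofReal ?_
      calc |F ω - g1 ω| ^ (4 * L) ≤ (|F ω| + |g1 ω|) ^ (4 * L) :=
            Real.rpow_le_rpow (abs_nonneg _) (abs_sub _ _) (by linarith)
        _ ≤ 2 ^ (4 * L) * (|F ω| ^ (4 * L) + |g1 ω| ^ (4 * L)) :=
            add_rpow_le_two_rpow _ _ _ (abs_nonneg _) (abs_nonneg _) (by linarith)
    calc M4X ≤ ∫⁻ ω, ENNReal.ofReal (2 ^ (4 * L) * (|F ω| ^ (4 * L) + |g1 ω| ^ (4 * L))) ∂μ :=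
          lintegral_mono hpt
      _ = ENNReal.ofReal (2 ^ (4 * L)) *
          (∫⁻ ω, (ENNReal.ofReal (|F ω| ^ (4 * L)) + ENNReal.ofReal (|g1 ω| ^ (4 * L))) ∂μ) := by
          rw [← lintegral_const_mul' _ _ ENNReal.ofReal_ne_top]
          refine lintegral_congr fun ω => ?_
          rw [← ENNReal.ofReal_add (Real.rpow_nonneg (abs_nonneg _) _)
            (Real.rpow_nonneg (abs_nonneg _) _),
            ← ENNReal.ofReal_mul (by positivity)]
      _ = ENNReal.ofReal (2 ^ (4 * L)) *
          ((∫⁻ ω, ENNReal.ofReal (|F ω| ^ (4 * L)) ∂μ)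
            + ∫⁻ ω, ENNReal.ofReal (|g1 ω| ^ (4 * L)) ∂μ) := by
          rw [lintegral_add_left' ((habsF.pow aemeasurable_const).ennreal_ofReal)]
      _ ≤ ENNReal.ofReal (2 ^ (4 * L)) * (BF4 + BF4) := by
          refine mul_le_mul_right (add_le_add le_rfl J4) _
      _ = ENNReal.ofReal (2 ^ (4 * L) * (I4 + I4)) := by
          rw [hBF4_eq, ← ENNReal.ofReal_add hI4nonneg hI4nonneg,
            ← ENNReal.ofReal_mul (by positivity)]
  -- integrability of Y
  have hYint : Integrable Y μ := by
    constructor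
    · exact hYaem.aestronglyMeasurable
    · rw [hasFiniteIntegral_iff_norm]
      have hpt : ∀ ω, ENNReal.ofReal ‖Y ω‖ ≤
          ENNReal.ofReal (1 + |F ω - g1 ω| ^ (4 * L)) := by
        intro ω
        refine ENNReal.ofReal_le_ofReal ?_
        rw [hYdef, Real.norm_eq_abs]
        calc |(F ω - g1 ω) ^ 2| = |F ω - g1 ω| ^ ((2:ℝ) * 1) := by
              rw [← sq_abs_rpow, Real.rpow_one]
          _ ≤ 1 + |F ω - g1 ω| ^ (4 * L) :=
              rpow_le_one_add_rpow _ _ _ (abs_nonneg _) (by norm_num) (by linarith)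
      calc (∫⁻ ω, ENNReal.ofReal ‖Y ω‖ ∂μ)
          ≤ ∫⁻ ω, ENNReal.ofReal (1 + |F ω - g1 ω| ^ (4 * L)) ∂μ := lintegral_mono hpt
        _ = ∫⁻ ω, (ENNReal.ofReal 1 + ENNReal.ofReal (|F ω - g1 ω| ^ (4 * L))) ∂μ := by
            refine lintegral_congr fun ω => ?_
            rw [← ENNReal.ofReal_add zero_le_one (Real.rpow_nonneg (abs_nonneg _) _)]
        _ = ENNReal.ofReal 1 * μ Set.univ + M4X := by
            rw [lintegral_add_left' aemeasurable_const, lintegral_const]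
        _ < ⊤ := by
            refine ENNReal.add_lt_top.mpr ⟨?_, ?_⟩
            · exact ENNReal.mul_lt_top ENNReal.ofReal_lt_top (measure_lt_top μ _)
            · exact lt_of_le_of_lt hM4X_le ENNReal.ofReal_lt_top
  -- Jensen for g2 at exponent 2L
  have hY2L_eq : (∫⁻ ω, ENNReal.ofReal (|Y ω| ^ (2 * L)) ∂μ) = M4X := by
    rw [hM4X]
    refine lintegral_congr fun ω => ?_
    rw [hYdef, sq_abs_rpow]
    norm_num
    ring_nf
  have J2 : ∫⁻ ω, ENNReal.ofReal (|g2 ω| ^ (2 * L)) ∂μ ≤ M4X := by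
    rw [← hY2L_eq]
    exact lintegral_rpow_condexp_le hG hYint (by linarith : (1:ℝ) < 2 * L)
  -- final lintegral bound
  set f : Ω → ℝ := fun ω => |(Y ω - g2 ω) ^ 2| ^ L with hfdef
  have hfaem : AEMeasurable f μ := by
    have h1 : AEMeasurable (fun ω => Y ω - g2 ω) μ := hYaem.sub hg2m.aemeasurable
    have h2 : AEMeasurable (fun ω => (Y ω - g2 ω) * (Y ω - g2 ω)) μ := h1.mul h1
    have h3 : AEMeasurable (fun ω => |(Y ω - g2 ω) * (Y ω - g2 ω)|) μ :=
      measurable_abs.comp_aemeasurable h2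
    have h4 : AEMeasurable (fun ω => |(Y ω - g2 ω) * (Y ω - g2 ω)| ^ L) μ :=
      h3.pow aemeasurable_const
    refine h4.congr (Filter.Eventually.of_forall fun ω => ?_)
    simp only [hfdef, sq]
  have hf_nonneg : ∀ ω, 0 ≤ f ω := fun ω => Real.rpow_nonneg (abs_nonneg _) _
  have hLZ : (∫⁻ ω, ENNReal.ofReal (f ω) ∂μ) ≤ ENNReal.ofReal (C * I4) := by
    have hpt : ∀ ω, ENNReal.ofReal (f ω) ≤
        ENNReal.ofReal (2 ^ (2 * L) * (|Y ω| ^ (2 * L) + |g2 ω| ^ (2 * L))) := by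
      intro ω
      refine ENNReal.ofReal_le_ofReal ?_
      rw [hfdef]
      calc |(Y ω - g2 ω) ^ 2| ^ L = |Y ω - g2 ω| ^ (2 * L) := by rw [sq_abs_rpow]
        _ ≤ (|Y ω| + |g2 ω|) ^ (2 * L) :=
            Real.rpow_le_rpow (abs_nonneg _) (abs_sub _ _) (by linarith)
        _ ≤ 2 ^ (2 * L) * (|Y ω| ^ (2 * L) + |g2 ω| ^ (2 * L)) :=
            add_rpow_le_two_rpow _ _ _ (abs_nonneg _) (abs_nonneg _) (by linarith)
    calc (∫⁻ ω, ENNReal.ofReal (f ω) ∂μ)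
        ≤ ∫⁻ ω, ENNReal.ofReal (2 ^ (2 * L) * (|Y ω| ^ (2 * L) + |g2 ω| ^ (2 * L))) ∂μ :=
          lintegral_mono hpt
      _ = ENNReal.ofReal (2 ^ (2 * L)) *
          ((∫⁻ ω, ENNReal.ofReal (|Y ω| ^ (2 * L)) ∂μ)
            + ∫⁻ ω, ENNReal.ofReal (|g2 ω| ^ (2 * L)) ∂μ) := by
          have hYabs : AEMeasurable (fun ω => ENNReal.ofReal (|Y ω| ^ (2 * L))) μ :=
            ((measurable_abs.comp_aemeasurable hYaem).pow
              (aemeasurable_const (b := 2 * L))).ennreal_ofReal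
          rw [← lintegral_add_left' hYabs,
            ← lintegral_const_mul' _ _ ENNReal.ofReal_ne_top]
          refine lintegral_congr fun ω => ?_
          rw [← ENNReal.ofReal_add (Real.rpow_nonneg (abs_nonneg _) _)
            (Real.rpow_nonneg (abs_nonneg _) _),
            ← ENNReal.ofReal_mul (by positivity)]
      _ ≤ ENNReal.ofReal (2 ^ (2 * L)) * (M4X + M4X) := by
          refine mul_le_mul_right (add_le_add (le_of_eq hY2L_eq) J2) _
      _ ≤ ENNReal.ofReal (2 ^ (2 * L)) *
          (ENNReal.ofReal (2 ^ (4 * L) * (I4 + I4)) + ENNReal.ofReal (2 ^ (4 * L) * (I4 + I4))) :=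
          mul_le_mul_right (add_le_add hM4X_le hM4X_le) _
      _ = ENNReal.ofReal (C * I4) := by
          rw [← ENNReal.ofReal_add (by positivity) (by positivity),
            ← ENNReal.ofReal_mul (by positivity)]
          congr 1
          rw [hC]; ring
  -- convert to Bochner integral
  have hfint : Integrable f μ := by
    constructor
    · exact hfaem.aestronglyMeasurable
    · rw [hasFiniteIntegral_iff_norm]
      have : (∫⁻ ω, ENNReal.ofReal ‖f ω‖ ∂μ) = ∫⁻ ω, ENNReal.ofReal (f ω) ∂μ := by
        refine lintegral_congr fun ω => ?_
        rw [Real.norm_eq_abs, abs_of_nonneg (hf_nonneg ω)]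
      rw [this]
      exact lt_of_le_of_lt hLZ ENNReal.ofReal_lt_top
  have hmain : (∫ ω, f ω ∂μ) ≤ C * I4 := by
    rw [integral_eq_lintegral_of_nonneg_ae (Filter.Eventually.of_forall hf_nonneg)
      hfaem.aestronglyMeasurable]
    calc (∫⁻ ω, ENNReal.ofReal (f ω) ∂μ).toReal
        ≤ (ENNReal.ofReal (C * I4)).toReal :=
          ENNReal.toReal_mono ENNReal.ofReal_ne_top hLZ
      _ = C * I4 := ENNReal.toReal_ofReal (by positivity)
  -- conclude
  have hT2 : 0 ≤ (∫ ω, |F ω| ^ (2 * L) ∂μ) ^ ((1 : ℝ) / 2)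
      * (∫ ω, |F ω| ^ (6 * L) ∂μ) ^ ((1 : ℝ) / 2) := by
    have h1 : 0 ≤ ∫ ω, |F ω| ^ (2 * L) ∂μ :=
      integral_nonneg fun ω => Real.rpow_nonneg (abs_nonneg _) _
    have h2 : 0 ≤ ∫ ω, |F ω| ^ (6 * L) ∂μ :=
      integral_nonneg fun ω => Real.rpow_nonneg (abs_nonneg _) _
    positivity
  have hT3 : 0 ≤ (∫ ω, |F ω| ^ (2 * L) ∂μ) ^ ((1 : ℝ) / 2)
      * (∫ ω, |F ω| ^ (4 * L) ∂μ) ^ ((1 : ℝ) / 4)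
      * (∫ ω, |F ω| ^ (8 * L) ∂μ) ^ ((1 : ℝ) / 4) := by
    have h1 : 0 ≤ ∫ ω, |F ω| ^ (2 * L) ∂μ :=
      integral_nonneg fun ω => Real.rpow_nonneg (abs_nonneg _) _
    have h2 : 0 ≤ ∫ ω, |F ω| ^ (4 * L) ∂μ :=
      integral_nonneg fun ω => Real.rpow_nonneg (abs_nonneg _) _
    have h3 : 0 ≤ ∫ ω, |F ω| ^ (8 * L) ∂μ :=
      integral_nonneg fun ω => Real.rpow_nonneg (abs_nonneg _) _
    positivity
  calc (∫ ω, f ω ∂μ) ≤ C * I4 := hmain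
    _ ≤ C * (I4 + ((∫ ω, |F ω| ^ (2 * L) ∂μ) ^ ((1 : ℝ) / 2)
            * (∫ ω, |F ω| ^ (6 * L) ∂μ) ^ ((1 : ℝ) / 2))
          + (∫ ω, |F ω| ^ (2 * L) ∂μ) ^ ((1 : ℝ) / 2)
            * (∫ ω, |F ω| ^ (4 * L) ∂μ) ^ ((1 : ℝ) / 4)
            * (∫ ω, |F ω| ^ (8 * L) ∂μ) ^ ((1 : ℝ) / 4)) := by
        refine mul_le_mul_of_nonneg_left ?_ hCpos.le
        linarith
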